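/- Let ω ∈ ℤ and let F : ℝ × ℝ → ℂ be arbitrary. Define, for rays x = (d,m) ∈ 𝓡 with d ≠ ±e₃, κ₁(x) = F(D(x), ⟨e₃, d⟩)·exp(−i·ω·arg(d₁ + i·d₂)). Then for all γ, t ∈ ℝ and all such x: κ₁((R_Z(γ), t·e₃)·x) = exp(−i·ω·γ)·κ₁(x). -/

import Mathlib

noncomputable section
open scoped InnerProductSpace

/-- ℝ³ with the Euclidean norm. -/
abbrev E3 : Type := EuclideanSpace ℝ (Fin 3)

/-- Elements of SE(3): a pair of a 3×3 matrix and a translation vector. -/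
abbrev SE3 : Type := Matrix (Fin 3) (Fin 3) ℝ × E3

/-- Matrix-vector multiplication on ℝ³. -/
def mv (R : Matrix (Fin 3) (Fin 3) ℝ) (v : E3) : E3 := WithLp.toLp 2 (R.mulVec v)

/-- Cross product on ℝ³. -/
def cross3 (a b : E3) : E3 :=
  WithLp.toLp 2 ![a 1 * b 2 - a 2 * b 1, a 2 * b 0 - a 0 * b 2, a 0 * b 1 - a 1 * b 0]

/-- `R` is a special orthogonal 3×3 matrix: `RᵀR = I` and `det R = 1`. -/
def isSO3 (R : Matrix (Fin 3) (Fin 3) ℝ) : Prop :=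
  R.transpose * R = 1 ∧ R.det = 1

/-- `(d, m)` are Plücker coordinates of an oriented line: `d` is a unit
direction and `m` is a moment with `⟨d, m⟩ = 0`. -/
def isRay (d m : E3) : Prop := ‖d‖ = 1 ∧ ⟪d, m⟫_ℝ = 0

/-- The standard basis vector e₁. -/
def e1 : E3 := WithLp.toLp 2 ![1, 0, 0]

/-- The standard basis vector e₂. -/
def e2 : E3 := WithLp.toLp 2 ![0, 1, 0]

/-- The standard basis vector e₃. -/
def e3 : E3 := WithLp.toLp 2 ![0, 0, 1]

/-- Action of `(R, t) ∈ SE(3)` on Plücker coordinates: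
`(R,t)·(d,m) = (Rd, Rm + t × (Rd))`. -/
def rayAct (R : Matrix (Fin 3) (Fin 3) ℝ) (t : E3) (d m : E3) : E3 × E3 :=
  (mv R d, mv R m + cross3 t (mv R d))

/-- Multiplication in SE(3): `(R₁,t₁)·(R₂,t₂) = (R₁R₂, t₁ + R₁t₂)`. -/
def se3Mul (g₁ g₂ : SE3) : SE3 := (g₁.1 * g₂.1, g₁.2 + mv g₁.1 g₂.2)

/-- Inverse in SE(3) (for `g.1 ∈ SO(3)`): `(R,t)⁻¹ = (Rᵀ, -Rᵀt)`. -/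
def se3Inv (g : SE3) : SE3 := (g.1.transpose, -(mv g.1.transpose g.2))

/-- Action of `g ∈ SE(3)` on the ray space. -/
def act (g : SE3) (x : E3 × E3) : E3 × E3 := rayAct g.1 g.2 x.1 x.2

/-- Action of `g = (R,t) ∈ SE(3)` on points of ℝ³: `g·p = Rp + t`. -/
def actPt (g : SE3) (p : E3) : E3 := mv g.1 p + g.2

/-- The origin ray `η = (e₃, 0)`. -/
def eta : E3 × E3 := (e3, 0)

/-- The twist `h(g, x) = s(g·x)⁻¹ · g · s(x)` of a section `s`. -/
def twist (s : E3 × E3 → SE3) (g : SE3) (x : E3 × E3) : SE3 :=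
  se3Mul (se3Inv (s (act g x))) (se3Mul g (s x))

/-- Rotation by γ about the z-axis. -/
def RZ (γ : ℝ) : Matrix (Fin 3) (Fin 3) ℝ :=
  !![Real.cos γ, -Real.sin γ, 0; Real.sin γ, Real.cos γ, 0; 0, 0, 1]

/-- Rotation by β about the y-axis. -/
def RY (β : ℝ) : Matrix (Fin 3) (Fin 3) ℝ :=
  !![Real.cos β, 0, Real.sin β; 0, 1, 0; -Real.sin β, 0, Real.cos β]

/-- The underlying line of the ray with Plücker coordinates `(d, m)`:
`L(d,m) = {p : p × d = m}`. -/
def lineOf (d m : E3) : Set E3 := {p : E3 | cross3 p d = m}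

/-- Infimum of the Euclidean distances between points of the line `L(d,m)`
and points of the z-axis. -/
def Dzaxis (d m : E3) : ℝ :=
  sInf {r : ℝ | ∃ p ∈ lineOf d m, ∃ s : ℝ, r = dist p (s • e3)}

/-- The z-coordinate `g(x) = e₃·(c - λ·d)` (with `c = d × m` and
`λ = ((e₁·c)(e₁·d) + (e₂·c)(e₂·d))/(1 - (e₃·d)²)`) of the point of `L(d,m)`
closest to the z-axis (for `d ≠ ±e₃`). -/
def zfoot (d m : E3) : ℝ :=
  ⟪e3, cross3 d m - ((⟪e1, cross3 d m⟫_ℝ * ⟪e1, d⟫_ℝ + ⟪e2, cross3 d m⟫_ℝ * ⟪e2, d⟫_ℝ)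
      / (1 - ⟪e3, d⟫_ℝ ^ 2)) • d⟫_ℝ

/-- The kernel `κ₁(x) = F(D(x), ⟨e₃, d⟩)·exp(−i·ω·arg(d₁ + i·d₂))`. -/
def kappa1 (ω : ℤ) (F : ℝ × ℝ → ℂ) (x : E3 × E3) : ℂ :=
  F (Dzaxis x.1 x.2, ⟪e3, x.1⟫_ℝ) *
    Complex.exp (-Complex.I * (ω : ℂ) *
      (Complex.arg ((x.1 0 : ℂ) + (x.1 1 : ℂ) * Complex.I) : ℂ))

/- ### Auxiliary lemmas -/

lemma mv0 (γ : ℝ) (v : E3) : mv (RZ γ) v 0 = Real.cos γ * v 0 - Real.sin γ * v 1 := by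
  simp [mv, RZ, Matrix.mulVec, dotProduct, Fin.sum_univ_three]; ring

lemma mv1 (γ : ℝ) (v : E3) : mv (RZ γ) v 1 = Real.sin γ * v 0 + Real.cos γ * v 1 := by
  simp [mv, RZ, Matrix.mulVec, dotProduct, Fin.sum_univ_three]

lemma mv2 (γ : ℝ) (v : E3) : mv (RZ γ) v 2 = v 2 := by
  simp [mv, RZ, Matrix.mulVec, dotProduct, Fin.sum_univ_three]

lemma cross3_0 (a b : E3) : cross3 a b 0 = a 1 * b 2 - a 2 * b 1 := rfl
lemma cross3_1 (a b : E3) : cross3 a b 1 = a 2 * b 0 - a 0 * b 2 := rfl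
lemma cross3_2 (a b : E3) : cross3 a b 2 = a 0 * b 1 - a 1 * b 0 := rfl

lemma e3_0 : e3 0 = 0 := rfl
lemma e3_1 : e3 1 = 0 := rfl
lemma e3_2 : e3 2 = 1 := rfl

lemma add_apply3 (a b : E3) (i : Fin 3) : (a + b) i = a i + b i := rfl
lemma smul_apply3 (c : ℝ) (a : E3) (i : Fin 3) : (c • a) i = c * a i := rfl
lemma neg_apply3 (a : E3) (i : Fin 3) : (-a) i = -(a i) := rfl

lemma E3_ext (a b : E3) (h0 : a 0 = b 0) (h1 : a 1 = b 1) (h2 : a 2 = b 2) : a = b := by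
  ext i; fin_cases i
  · exact h0
  · exact h1
  · exact h2

/-- Cross product is `RZ`-equivariant. -/
lemma cross3_mvRZ (γ : ℝ) (a b : E3) :
    cross3 (mv (RZ γ) a) (mv (RZ γ) b) = mv (RZ γ) (cross3 a b) := by
  refine E3_ext _ _ ?_ ?_ ?_ <;>
    simp only [cross3_0, cross3_1, cross3_2, mv0, mv1, mv2]
  · ring
  · ring
  · linear_combination (a 0 * b 1 - a 1 * b 0) * Real.sin_sq_add_cos_sq γ

/-- `RZ (-γ)` inverts `RZ γ` on vectors. -/
lemma mvRZ_neg (γ : ℝ) (v : E3) : mv (RZ (-γ)) (mv (RZ γ) v) = v := by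
  refine E3_ext _ _ ?_ ?_ (by rw [mv2, mv2]) <;>
    simp only [mv0, mv1, mv2, Real.cos_neg, Real.sin_neg]
  · linear_combination v 0 * Real.sin_sq_add_cos_sq γ
  · linear_combination v 1 * Real.sin_sq_add_cos_sq γ

/-- `RZ γ` fixes scalar multiples of `e3`. -/
lemma mvRZ_smul_e3 (γ t : ℝ) : mv (RZ γ) (t • e3) = t • e3 := by
  refine E3_ext _ _ ?_ ?_ ?_ <;>
    simp [mv0, mv1, mv2, smul_apply3, e3_0, e3_1, e3_2]

/-- `RZ γ` preserves distances. -/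
lemma dist_mvRZ (γ : ℝ) (x y : E3) : dist (mv (RZ γ) x) (mv (RZ γ) y) = dist x y := by
  rw [EuclideanSpace.dist_eq, EuclideanSpace.dist_eq]
  congr 1
  simp only [Fin.sum_univ_three, Real.dist_eq, sq_abs, mv0, mv1, mv2]
  linear_combination ((x 0 - y 0) ^ 2 + (x 1 - y 1) ^ 2) * Real.sin_sq_add_cos_sq γ

/-- Transport of line membership under the screw motion `(RZ γ, t • e3)`. -/
lemma mem_line_trans (γ t : ℝ) (d m p : E3) (hp : cross3 p d = m) :
    cross3 (mv (RZ γ) p + t • e3) (mv (RZ γ) d)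
      = mv (RZ γ) m + cross3 (t • e3) (mv (RZ γ) d) := by
  have h1 : cross3 (mv (RZ γ) p + t • e3) (mv (RZ γ) d)
      = cross3 (mv (RZ γ) p) (mv (RZ γ) d) + cross3 (t • e3) (mv (RZ γ) d) := by
    refine E3_ext _ _ ?_ ?_ ?_ <;>
      simp only [cross3_0, cross3_1, cross3_2, add_apply3] <;> ring
  rw [h1, cross3_mvRZ, hp]

/-- Distance transport under the screw motion. -/
lemma dist_trans (γ t s : ℝ) (p : E3) :
    dist (mv (RZ γ) p + t • e3) ((s + t) • e3) = dist p (s • e3) := by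
  have h1 : (s + t) • e3 = mv (RZ γ) (s • e3) + t • e3 := by
    rw [mvRZ_smul_e3, add_smul]
  rw [h1, dist_add_right, dist_mvRZ]

/-- The distance-to-z-axis sets agree. -/
lemma dzaxis_set_eq (γ t : ℝ) (d m : E3) :
    {r : ℝ | ∃ p ∈ lineOf (mv (RZ γ) d)
        (mv (RZ γ) m + cross3 (t • e3) (mv (RZ γ) d)), ∃ s : ℝ, r = dist p (s • e3)}
      = {r : ℝ | ∃ p ∈ lineOf d m, ∃ s : ℝ, r = dist p (s • e3)} := by
  ext r
  constructor
  · rintro ⟨p', hp', s', rfl⟩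
    refine ⟨mv (RZ (-γ)) p' + (-t) • e3, ?_, s' + (-t), ?_⟩
    · have h := mem_line_trans (-γ) (-t) (mv (RZ γ) d)
        (mv (RZ γ) m + cross3 (t • e3) (mv (RZ γ) d)) p' hp'
      rw [mvRZ_neg] at h
      have h2 : mv (RZ (-γ)) (mv (RZ γ) m + cross3 (t • e3) (mv (RZ γ) d))
          = m + cross3 (t • e3) d := by
        have hadd : mv (RZ (-γ)) (mv (RZ γ) m + cross3 (t • e3) (mv (RZ γ) d))
            = mv (RZ (-γ)) (mv (RZ γ) m) + mv (RZ (-γ)) (cross3 (t • e3) (mv (RZ γ) d)) := by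
          simpa [mv, ← WithLp.toLp_add] using congrArg (WithLp.toLp 2)
            (Matrix.mulVec_add (RZ (-γ)) (mv (RZ γ) m) (cross3 (t • e3) (mv (RZ γ) d)))
        rw [hadd, mvRZ_neg, ← cross3_mvRZ, mvRZ_smul_e3, mvRZ_neg]
      rw [h2] at h
      have h3 : m + cross3 (t • e3) d + cross3 ((-t) • e3) d = m := by
        refine E3_ext _ _ ?_ ?_ ?_ <;>
          simp only [cross3_0, cross3_1, cross3_2, add_apply3, smul_apply3,
            e3_0, e3_1, e3_2] <;> ring
      rw [lineOf, Set.mem_setOf_eq, h, h3]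
    · exact (dist_trans (-γ) (-t) s' p').symm
  · rintro ⟨p, hp, s, rfl⟩
    exact ⟨mv (RZ γ) p + t • e3, mem_line_trans γ t d m p hp, s + t, (dist_trans γ t s p).symm⟩

lemma inner_e3 (d : E3) : ⟪e3, d⟫_ℝ = d 2 := by
  simp [PiLp.inner_apply, e3, Fin.sum_univ_three]

/-- `exp(-i ω arg w)` as a `zpow` of the unit vector `w / |w|`. -/
lemma exp_neg_I_omega_arg (ω : ℤ) (w : ℂ) (hw : w ≠ 0) :
    Complex.exp (-Complex.I * (ω : ℂ) * (Complex.arg w : ℂ))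
      = (w / (‖w‖ : ℂ)) ^ (-ω) := by
  have habs : (‖w‖ : ℂ) ≠ 0 := by
    simpa using (norm_ne_zero_iff.mpr hw)
  have h1 : Complex.exp ((Complex.arg w : ℂ) * Complex.I) = w / (‖w‖ : ℂ) := by
    rw [eq_div_iff habs, mul_comm]
    exact Complex.norm_mul_exp_arg_mul_I w
  have h2 : -Complex.I * (ω : ℂ) * (Complex.arg w : ℂ)
      = ((-ω : ℤ) : ℂ) * ((Complex.arg w : ℂ) * Complex.I) := by push_cast; ring
  rw [h2, Complex.exp_int_mul, h1]

/-- Rotating a nonzero complex number multiplies the kernel factor by `exp(-iωγ)`. -/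
lemma arg_factor (ω : ℤ) (γ : ℝ) (w : ℂ) (hw : w ≠ 0) :
    Complex.exp (-Complex.I * (ω : ℂ) *
        (Complex.arg (Complex.exp ((γ : ℂ) * Complex.I) * w) : ℂ))
      = Complex.exp (-Complex.I * (ω : ℂ) * (γ : ℂ)) *
        Complex.exp (-Complex.I * (ω : ℂ) * (Complex.arg w : ℂ)) := by
  have he : Complex.exp ((γ : ℂ) * Complex.I) ≠ 0 := Complex.exp_ne_zero _
  have hw' : Complex.exp ((γ : ℂ) * Complex.I) * w ≠ 0 := mul_ne_zero he hw
  rw [exp_neg_I_omega_arg ω _ hw', exp_neg_I_omega_arg ω w hw]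
  have habs : ‖Complex.exp ((γ : ℂ) * Complex.I) * w‖ = ‖w‖ := by
    rw [norm_mul, Complex.norm_exp_ofReal_mul_I, one_mul]
  rw [habs]
  have hsplit : Complex.exp ((γ : ℂ) * Complex.I) * w / (‖w‖ : ℂ)
      = Complex.exp ((γ : ℂ) * Complex.I) * (w / (‖w‖ : ℂ)) := by ring
  rw [hsplit, mul_zpow]
  congr 1
  rw [← Complex.exp_int_mul]
  congr 1
  push_cast; ring

/-- `κ₁((R_Z(γ), t·e₃)·x) = exp(−i·ω·γ)·κ₁(x)` for every ray `x`
with direction `≠ ±e₃`. -/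
theorem statement10 (ω : ℤ) (F : ℝ × ℝ → ℂ) (d m : E3) (h : isRay d m)
    (h1 : d ≠ e3) (h2 : d ≠ -e3) (γ t : ℝ) :
    kappa1 ω F (rayAct (RZ γ) (t • e3) d m)
      = Complex.exp (-Complex.I * (ω : ℂ) * (γ : ℂ)) * kappa1 ω F (d, m) := by
  -- The rotated ray
  have hact : rayAct (RZ γ) (t • e3) d m
      = (mv (RZ γ) d, mv (RZ γ) m + cross3 (t • e3) (mv (RZ γ) d)) := rfl
  -- nonvanishing of d₀ + i d₁
  have hz : ((d 0 : ℂ) + (d 1 : ℂ) * Complex.I) ≠ 0 := by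
    intro hzero
    have hre : d 0 = 0 := by
      have := congrArg Complex.re hzero
      simpa using this
    have him : d 1 = 0 := by
      have := congrArg Complex.im hzero
      simpa using this
    have hnorm : d 2 ^ 2 = 1 := by
      have hn := h.1
      have hn2 : ‖d‖ ^ 2 = 1 := by rw [hn]; norm_num
      rw [EuclideanSpace.norm_eq] at hn2
      rw [Real.sq_sqrt (by positivity)] at hn2
      simpa [Fin.sum_univ_three, hre, him] using hn2
    have : d 2 = 1 ∨ d 2 = -1 := by
      have h' : (d 2 - 1) * (d 2 + 1) = 0 := by nlinarith [hnorm]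
      rcases mul_eq_zero.mp h' with h'' | h''
      · left; linarith
      · right; linarith
    rcases this with h21 | h21
    · exact h1 (E3_ext _ _ (by simp [e3_0, hre]) (by simp [e3_1, him]) (by simp [e3_2, h21]))
    · exact h2 (E3_ext _ _ (by simp [neg_apply3, e3_0, hre]) (by simp [neg_apply3, e3_1, him])
        (by simp [neg_apply3, e3_2, h21]))
  -- rotated complex coordinate
  have hrot : ((mv (RZ γ) d) 0 : ℂ) + ((mv (RZ γ) d) 1 : ℂ) * Complex.I
      = Complex.exp ((γ : ℂ) * Complex.I) * ((d 0 : ℂ) + (d 1 : ℂ) * Complex.I) := by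
    rw [Complex.exp_mul_I, mv0, mv1]
    push_cast
    linear_combination (-(Complex.sin (γ:ℂ)) * (d 1 : ℂ)) * Complex.I_sq
  -- Dzaxis invariance
  have hD : Dzaxis (mv (RZ γ) d) (mv (RZ γ) m + cross3 (t • e3) (mv (RZ γ) d))
      = Dzaxis d m := by
    unfold Dzaxis
    rw [dzaxis_set_eq]
  -- e₃ component invariance
  have hinner : ⟪e3, mv (RZ γ) d⟫_ℝ = ⟪e3, d⟫_ℝ := by
    rw [inner_e3, inner_e3, mv2]
  rw [hact]
  unfold kappa1
  simp only [hD, hinner, hrot]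
  rw [arg_factor ω γ _ hz]
  ring

end
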